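/- Let L be a thin Lie algebra (positively graded, dim L_1 = 2, satisfying the covering property) with dim L_3 = 1. Then no two consecutive homogeneous components L_m and L_{m+1} with m > 1 can both be two-dimensional; that is, any two diamonds are separated by at least one one-dimensional component. -/

import Mathlib

open Module Submodule

section Aux

variable {F : Type*} [Field F] {L : Type*} [LieRing L] [LieAlgebra F L]

/-- The canonical "generated in degree one" filtration. -/
def stmt7N (C : ℕ → Submodule F L) : ℕ → Submodule F L
  | 0 => ⊥
  | 1 => C 1
  | (k+2) => Submodule.span F {w : L | ∃ z ∈ stmt7N C (k+1), ∃ u ∈ C 1, w = ⁅z, u⁆}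

theorem stmt7N_le (C : ℕ → Submodule F L)
    (hgrading : ∀ i j : ℕ, ∀ u ∈ C i, ∀ v ∈ C j, ⁅u, v⁆ ∈ C (i + j)) :
    ∀ k, stmt7N C k ≤ C k := by
  intro k
  induction k with
  | zero => exact bot_le
  | succ k ih =>
    match k, ih with
    | 0, _ => exact le_of_eq rfl
    | (k+1), ih =>
      refine Submodule.span_le.2 ?_
      rintro w ⟨z, hz, u, hu, rfl⟩
      exact hgrading (k+1) 1 z (ih hz) u hu

theorem stmt7N_succ_mem (C : ℕ → Submodule F L) {j : ℕ} (hj : 1 ≤ j)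
    {a u : L} (ha : a ∈ stmt7N C j) (hu : u ∈ C 1) : ⁅a, u⁆ ∈ stmt7N C (j+1) := by
  match j, hj with
  | (k+1), _ => exact Submodule.subset_span ⟨a, ha, u, hu, rfl⟩

theorem stmt7N_bracket (C : ℕ → Submodule F L) :
    ∀ k j, 1 ≤ j → ∀ a ∈ stmt7N C j, ∀ b ∈ stmt7N C k, ⁅a, b⁆ ∈ stmt7N C (j + k) := by
  intro k
  induction k with
  | zero =>
    intro j hj a ha b hb
    have : b = 0 := (Submodule.mem_bot F).1 hb
    simp [this]
  | succ k ih =>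
    match k, ih with
    | 0, _ =>
      intro j hj a ha b hb
      exact stmt7N_succ_mem C hj ha hb
    | (k+1), ih =>
      intro j hj a ha b hb
      have hb' : b ∈ Submodule.span F {w : L | ∃ z ∈ stmt7N C (k+1), ∃ u ∈ C 1, w = ⁅z, u⁆} := hb
      clear hb
      induction hb' using Submodule.span_induction with
      | mem w hw =>
        obtain ⟨z, hz, u, hu, rfl⟩ := hw
        have h1 : ⁅a, ⁅z, u⁆⁆ = ⁅⁅a, z⁆, u⁆ + ⁅z, ⁅a, u⁆⁆ := leibniz_lie a z u
        rw [h1]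
        refine add_mem ?_ ?_
        · have haz : ⁅a, z⁆ ∈ stmt7N C (j + (k+1)) := ih j hj a ha z hz
          have h2 := stmt7N_succ_mem C (le_trans hj (by omega)) haz hu
          have e : j + (k+1) + 1 = j + (k+1+1) := by omega
          exact e ▸ h2
        · have hau : ⁅a, u⁆ ∈ stmt7N C (j+1) := stmt7N_succ_mem C hj ha hu
          have h2 : ⁅⁅a, u⁆, z⁆ ∈ stmt7N C ((j+1) + (k+1)) := ih (j+1) (by omega) _ hau z hz
          have h3 : ⁅z, ⁅a, u⁆⁆ = -⁅⁅a, u⁆, z⁆ := (lie_skew _ _).symm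
          rw [h3]
          refine neg_mem ?_
          have e : (j+1) + (k+1) = j + (k+1+1) := by omega
          exact e ▸ h2
      | zero => simp
      | add w₁ w₂ h₁ h₂ p₁ p₂ => rw [lie_add]; exact add_mem p₁ p₂
      | smul c w hw p => rw [lie_smul]; exact Submodule.smul_mem _ c p

theorem stmt7_C_eq_N (C : ℕ → Submodule F L)
    (hinternal : DirectSum.IsInternal C)
    (hgrading : ∀ i j : ℕ, ∀ u ∈ C i, ∀ v ∈ C j, ⁅u, v⁆ ∈ C (i + j))
    (hgen : LieSubalgebra.lieSpan F L (C 1 : Set L) = ⊤) :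
    ∀ k, C k = stmt7N C k := by
  have hlie : ∀ a ∈ (⨆ k, stmt7N C k), ∀ b ∈ (⨆ k, stmt7N C k),
      ⁅a, b⁆ ∈ (⨆ k, stmt7N C k) := by
    intro a ha b hb
    refine Submodule.iSup_induction _ (motive := fun a => ⁅a, b⁆ ∈ (⨆ k, stmt7N C k)) ha ?_ (by simp) ?_
    · intro j a' ha'
      refine Submodule.iSup_induction _ (motive := fun b => ⁅a', b⁆ ∈ (⨆ k, stmt7N C k)) hb ?_ (by simp) ?_
      · intro k b' hb'
        rcases Nat.eq_zero_or_pos j with hj | hj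
        · have : a' = 0 := by
            rw [hj] at ha'; exact (Submodule.mem_bot F).1 ha'
          simp [this]
        · exact le_iSup (stmt7N C) (j + k) (stmt7N_bracket C k j hj a' ha' b' hb')
      · intro b₁ b₂ hb₁ hb₂
        rw [lie_add]; exact add_mem hb₁ hb₂
    · intro a₁ a₂ h₁ h₂
      rw [add_lie]; exact add_mem h₁ h₂
  let SL : LieSubalgebra F L :=
    { carrier := (⨆ k, stmt7N C k : Submodule F L), add_mem' := fun h h' => add_mem h h',
      zero_mem' := zero_mem _, smul_mem' := fun c _ h => Submodule.smul_mem _ c h,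
      lie_mem' := fun {a b} ha hb => hlie a ha b hb }
  have hC1S : (C 1 : Set L) ⊆ SL := fun c hc => le_iSup (stmt7N C) 1 (by exact hc)
  have hSL : (⨆ k, stmt7N C k : Submodule F L) = ⊤ := by
    have h1 : (⊤ : LieSubalgebra F L) ≤ SL := hgen ▸ (LieSubalgebra.lieSpan_le.2 hC1S)
    have h2 : SL = ⊤ := top_le_iff.1 h1
    have h3 : SL.toSubmodule = (⊤ : LieSubalgebra F L).toSubmodule := by rw [h2]
    rw [LieSubalgebra.top_toSubmodule] at h3; exact h3
  intro k
  refine le_antisymm ?_ (stmt7N_le C hgrading k)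
  intro c hc
  have hcS : c ∈ (⨆ k, stmt7N C k : Submodule F L) := by rw [hSL]; trivial
  rw [Submodule.mem_iSup_iff_exists_finsupp] at hcS
  obtain ⟨f, hf, hsum⟩ := hcS
  have hfk : f k ∈ stmt7N C k := hf k
  have hrest : c - f k ∈ ⨆ j, ⨆ (_ : j ≠ k), C j := by
    have h4 := Finsupp.add_sum_erase' f k (fun _ xi => xi) (fun _ => rfl)
    rw [hsum] at h4
    have h5 : c - f k = (Finsupp.erase k f).sum fun _ xi => xi := (eq_sub_of_add_eq' h4).symm
    rw [h5]
    refine Submodule.sum_mem _ ?_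
    intro j hj
    have hjk : j ≠ k := by
      intro h
      rw [h] at hj
      exact (Finsupp.mem_support_iff.1 hj) (by simp)
    have hfj : (Finsupp.erase k f) j ∈ C j := by
      rw [Finsupp.erase_ne hjk]
      exact stmt7N_le C hgrading j (hf j)
    have hle : C j ≤ ⨆ j', ⨆ (_ : j' ≠ k), C j' := by
      refine le_iSup_of_le j ?_
      exact le_iSup_of_le hjk le_rfl
    exact hle hfj
  have hck : c - f k ∈ C k := sub_mem hc (stmt7N_le C hgrading k hfk)
  have hzero : c - f k = 0 := by
    have hd := hinternal.submodule_iSupIndep k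
    have := hd.le_bot ⟨hck, hrest⟩
    simpa using this
  have : c = f k := by rw [sub_eq_zero] at hzero; exact hzero
  rw [this]
  exact hfk

end Aux

section Aux2

variable {F : Type*} [Field F] {L : Type*} [LieRing L] [LieAlgebra F L]

theorem stmt7_bot_mono (C : ℕ → Submodule F L)
    (hinternal : DirectSum.IsInternal C)
    (hgrading : ∀ i j : ℕ, ∀ u ∈ C i, ∀ v ∈ C j, ⁅u, v⁆ ∈ C (i + j))
    (hgen : LieSubalgebra.lieSpan F L (C 1 : Set L) = ⊤) :
    ∀ i j, 1 ≤ i → i ≤ j → C i = ⊥ → C j = ⊥ := by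
  have hN := stmt7_C_eq_N C hinternal hgrading hgen
  have hstep : ∀ i, 1 ≤ i → C i = ⊥ → C (i+1) = ⊥ := by
    intro i hi h
    match i, hi, h with
    | (k+1), _, h =>
      rw [hN (k+2)]
      refine le_bot_iff.1 (Submodule.span_le.2 ?_)
      rintro w ⟨z, hz, u, hu, rfl⟩
      have : z = 0 := by
        have := stmt7N_le C hgrading (k+1) hz
        rw [h] at this
        simpa using this
      simp [this]
  intro i j hi hij h
  obtain ⟨d, rfl⟩ := Nat.exists_eq_add_of_le hij
  clear hij
  induction d with
  | zero => exact h
  | succ d ih =>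
    have := hstep (i + d) (by omega) ih
    simpa [Nat.add_assoc] using this

theorem stmt7_fr_span_singleton_le (v : L) : finrank F (span F {v} : Submodule F L) ≤ 1 := by
  by_cases hv : v = 0
  · rw [hv, Submodule.span_zero_singleton]
    simp
  · rw [finrank_span_singleton hv]

theorem stmt7_indep {p q : L} {W : Submodule F L} (hW : W = span F {p, q})
    (h2 : finrank F W = 2) : ∀ s t : F, s • p + t • q = 0 → s = 0 ∧ t = 0 := by
  have key : ∀ u v : L, W = span F {u, v} → ∀ s t : F, s ≠ 0 → s • u + t • v = 0 → False := by
    intro u v hWuv s t hs h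
    have h1 : s • u = -(t • v) := eq_neg_of_add_eq_zero_left h
    have hu : u = (-(s⁻¹ * t)) • v := by
      calc u = s⁻¹ • (s • u) := by rw [smul_smul, inv_mul_cancel₀ hs, one_smul]
      _ = (-(s⁻¹ * t)) • v := by rw [h1, smul_neg, smul_smul, ← neg_smul]
    have hle : W ≤ span F {v} := by
      rw [hWuv]
      refine Submodule.span_le.2 ?_
      rintro w (rfl | rfl)
      · rw [hu]; exact Submodule.smul_mem _ _ (Submodule.subset_span rfl)
      · exact Submodule.subset_span rfl
    haveI : FiniteDimensional F (span F {v} : Submodule F L) :=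
      FiniteDimensional.span_of_finite F (Set.toFinite _)
    have hfr := Submodule.finrank_mono hle
    have := stmt7_fr_span_singleton_le (F := F) v
    omega
  intro s t hst
  constructor
  · by_contra hs
    exact key p q hW s t hs hst
  · by_contra ht
    refine key q p (by rw [hW, Set.pair_comm]) t s ht ?_
    rw [add_comm]; exact hst

theorem stmt7_cov2 {C : ℕ → Submodule F L}
    (hcov : ∀ i : ℕ, 1 ≤ i → ∀ z ∈ C i, z ≠ 0 →
      Submodule.span F {w : L | ∃ u ∈ C 1, w = ⁅z, u⁆} = C (i + 1))
    {x y : L} (hC1 : C 1 = span F {x, y}) {i : ℕ} (hi : 1 ≤ i) {z : L}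
    (hz : z ∈ C i) (h0 : z ≠ 0) : C (i+1) = span F {⁅z, x⁆, ⁅z, y⁆} := by
  have h := hcov i hi z hz h0
  refine le_antisymm ?_ ?_
  · rw [← h]
    refine Submodule.span_le.2 ?_
    rintro w ⟨u, hu, rfl⟩
    rw [hC1] at hu
    obtain ⟨s, t, rfl⟩ := Submodule.mem_span_pair.1 hu
    have : ⁅z, s • x + t • y⁆ = s • ⁅z, x⁆ + t • ⁅z, y⁆ := by
      rw [lie_add, lie_smul, lie_smul]
    rw [this]
    exact add_mem (Submodule.smul_mem _ _ (Submodule.subset_span (Set.mem_insert _ _)))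
      (Submodule.smul_mem _ _ (Submodule.subset_span (Set.mem_insert_of_mem _ rfl)))
  · rw [← h]
    refine Submodule.span_le.2 ?_
    rintro w (rfl | rfl)
    · exact Submodule.subset_span ⟨x, by rw [hC1]; exact Submodule.subset_span (Set.mem_insert _ _), rfl⟩
    · exact Submodule.subset_span ⟨y, by rw [hC1]; exact Submodule.subset_span (Set.mem_insert_of_mem _ rfl), rfl⟩

theorem stmt7_dagger {x y : L} (h : ⁅⁅x, y⁆, y⁆ = 0) (z : L) :
    ⁅⁅⁅z, x⁆, y⁆, y⁆ + ⁅⁅⁅z, y⁆, y⁆, x⁆ = ⁅⁅⁅z, y⁆, x⁆, y⁆ + ⁅⁅⁅z, y⁆, x⁆, y⁆ := by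
  have e1 : ∀ a : L, ⁅a, ⁅x, y⁆⁆ = ⁅⁅a, x⁆, y⁆ - ⁅⁅a, y⁆, x⁆ := by
    intro a
    rw [leibniz_lie a x y, ← lie_skew ⁅a, y⁆ x]
    abel
  have e2 : ⁅⁅z, ⁅x, y⁆⁆, y⁆ = ⁅⁅z, y⁆, ⁅x, y⁆⁆ := by
    have h3 := leibniz_lie z ⁅x, y⁆ y
    rw [h, lie_zero] at h3
    have h5 : ⁅⁅z, ⁅x, y⁆⁆, y⁆ = -⁅⁅x, y⁆, ⁅z, y⁆⁆ := eq_neg_of_add_eq_zero_left h3.symm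
    rw [h5, lie_skew]
  have e3 := e1 ⁅z, y⁆
  have e4 : ⁅⁅z, ⁅x, y⁆⁆, y⁆ = ⁅⁅⁅z, x⁆, y⁆, y⁆ - ⁅⁅⁅z, y⁆, x⁆, y⁆ := by
    rw [e1 z, sub_lie]
  have h6 : ⁅⁅⁅z, x⁆, y⁆, y⁆ - ⁅⁅⁅z, y⁆, x⁆, y⁆ = ⁅⁅⁅z, y⁆, x⁆, y⁆ - ⁅⁅⁅z, y⁆, y⁆, x⁆ :=
    e4.symm.trans (e2.trans e3)
  have h7 := eq_add_of_sub_eq h6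
  rw [h7]
  abel

end Aux2

/-- Let `L` be a thin Lie algebra (infinite-dimensional positively graded Lie algebra,
generated by `L_1` with `dim L_1 = 2`, each `dim L_i ≤ 2`, with the covering property)
with `dim L_3 = 1`. Then no two consecutive homogeneous components `L_m` and `L_{m+1}`
with `m > 1` can both be two-dimensional (diamonds). -/
theorem stmt_7 (F : Type*) [Field F] (L : Type*) [LieRing L] [LieAlgebra F L]
    (C : ℕ → Submodule F L) (hC0 : C 0 = ⊥)
    (hinternal : DirectSum.IsInternal C)
    (hgrading : ∀ i j : ℕ, ∀ u ∈ C i, ∀ v ∈ C j, ⁅u, v⁆ ∈ C (i + j))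
    (hdim1 : Module.finrank F (C 1) = 2)
    (hdimle : ∀ i : ℕ, Module.finrank F (C i) ≤ 2)
    (hgen : LieSubalgebra.lieSpan F L (C 1 : Set L) = ⊤)
    (hcov : ∀ i : ℕ, 1 ≤ i → ∀ z ∈ C i, z ≠ 0 →
      Submodule.span F {w : L | ∃ u ∈ C 1, w = ⁅z, u⁆} = C (i + 1))
    (hinf : ¬ FiniteDimensional F L)
    (hdim3 : Module.finrank F (C 3) = 1) :
    ∀ m : ℕ, 1 < m →
      ¬ (Module.finrank F (C m) = 2 ∧ Module.finrank F (C (m + 1)) = 2) := by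
  intro m₀ hm₀ hbad₀
  classical
  have hex : ∃ m, 1 < m ∧ Module.finrank F (C m) = 2 ∧ Module.finrank F (C (m+1)) = 2 :=
    ⟨m₀, hm₀, hbad₀.1, hbad₀.2⟩
  obtain ⟨hm1, hfm, hfm1⟩ := Nat.find_spec hex
  set m := Nat.find hex with hm_def
  have hmin : ∀ j, j < m → ¬ (1 < j ∧ Module.finrank F (C j) = 2 ∧
      Module.finrank F (C (j+1)) = 2) := fun j hj => Nat.find_min hex hj
  -- every component up to m is nonzero
  have hCm_ne : C m ≠ ⊥ := by
    intro h
    rw [h] at hfm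
    simp [finrank_bot] at hfm
  have hne : ∀ i, 1 ≤ i → i ≤ m → C i ≠ ⊥ := by
    intro i h1 h2 hb
    exact hCm_ne (stmt7_bot_mono C hinternal hgrading hgen i m h1 h2 hb)
  -- a spanning pair for C 1
  haveI hfd1 : FiniteDimensional F (C 1) := Module.finite_of_finrank_pos (by omega)
  obtain ⟨e, f, he, hf, hspan⟩ :
      ∃ e f : L, e ∈ C 1 ∧ f ∈ C 1 ∧ C 1 = span F {e, f} := by
    let B := finBasisOfFinrankEq F (C 1) hdim1
    refine ⟨B 0, B 1, (B 0).2, (B 1).2, le_antisymm ?_ (Submodule.span_le.2 ?_)⟩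
    · intro c hc
      have h := B.sum_repr ⟨c, hc⟩
      rw [Fin.sum_univ_two] at h
      have h2 := congrArg (fun v : C 1 => (v : L)) h
      simp only [Submodule.coe_add, SetLike.val_smul] at h2
      exact Submodule.mem_span_pair.2 ⟨_, _, h2⟩
    · rintro w (rfl | rfl)
      · exact (B 0).2
      · exact (B 1).2
  have hene : e ≠ 0 := by
    intro h
    have hle : C 1 ≤ span F {f} := by
      rw [hspan, h]
      refine Submodule.span_le.2 ?_
      rintro w (rfl | rfl)
      · exact zero_mem _
      · exact Submodule.subset_span rfl
    haveI : FiniteDimensional F (span F {f} : Submodule F L) :=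
      FiniteDimensional.span_of_finite F (Set.toFinite _)
    have h1 := Submodule.finrank_mono hle
    have h2 := stmt7_fr_span_singleton_le (F := F) f
    omega
  -- C 2 is spanned by v₀ := ⁅e, f⁆
  have hv₀C2 : ⁅e, f⁆ ∈ C 2 := hgrading 1 1 e he f hf
  have hC2span : C 2 = span F {⁅e, f⁆} := by
    have h := stmt7_cov2 hcov hspan le_rfl he hene
    rw [lie_self] at h
    rw [h, Submodule.span_insert_eq_span (zero_mem _)]
  have hv₀ne : ⁅e, f⁆ ≠ 0 := by
    intro h
    have : C 2 = ⊥ := by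
      rw [hC2span, h, Submodule.span_zero_singleton]
    exact hne 2 (by omega) (by omega) this
  haveI hfd3 : FiniteDimensional F (C 3) := Module.finite_of_finrank_pos (by omega)
  -- choose y ≠ 0 in C 1 with ⁅⁅e,f⁆, y⁆ = 0
  obtain ⟨y, hyC, hyne, hvy⟩ : ∃ y : L, y ∈ C 1 ∧ y ≠ 0 ∧ ⁅⁅e, f⁆, y⁆ = 0 := by
    by_cases hye : ⁅⁅e, f⁆, e⁆ = 0
    · exact ⟨e, he, hene, hye⟩
    · have hteC : ⁅⁅e, f⁆, e⁆ ∈ C 3 := hgrading 2 1 _ hv₀C2 e he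
      have hspan3 : span F {⁅⁅e, f⁆, e⁆} = C 3 := by
        refine eq_of_le_of_finrank_le (Submodule.span_le.2 ?_) ?_
        · rintro w rfl
          exact hteC
        · rw [finrank_span_singleton hye, hdim3]
      have htfC : ⁅⁅e, f⁆, f⁆ ∈ C 3 := hgrading 2 1 _ hv₀C2 f hf
      rw [← hspan3] at htfC
      obtain ⟨c, hc⟩ := Submodule.mem_span_singleton.1 htfC
      refine ⟨f - c • e, sub_mem hf (Submodule.smul_mem _ _ he), ?_, ?_⟩
      · intro h
        have hfce : f = c • e := by
          have := sub_eq_zero.1 h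
          exact this
        have hle : C 1 ≤ span F {e} := by
          rw [hspan]
          refine Submodule.span_le.2 ?_
          rintro w (rfl | rfl)
          · exact Submodule.subset_span rfl
          · rw [hfce]; exact Submodule.smul_mem _ _ (Submodule.subset_span rfl)
        haveI : FiniteDimensional F (span F {e} : Submodule F L) :=
          FiniteDimensional.span_of_finite F (Set.toFinite _)
        have h1 := Submodule.finrank_mono hle
        have h2 := stmt7_fr_span_singleton_le (F := F) e
        omega
      · rw [lie_sub, lie_smul, ← hc]
        abel
  -- complete y to a spanning pair {x, y} of C 1
  obtain ⟨x, hxC, hCxy⟩ : ∃ x : L, x ∈ C 1 ∧ C 1 = span F {x, y} := by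
    have hy' : y ∈ span F {e, f} := by rw [← hspan]; exact hyC
    obtain ⟨α, β, hαβ⟩ := Submodule.mem_span_pair.1 hy'
    by_cases hβ : β = 0
    · have hyα : y = α • e := by rw [← hαβ, hβ, zero_smul, add_zero]
      have hα : α ≠ 0 := by
        intro h
        rw [h, zero_smul] at hyα
        exact hyne hyα
      have hemem : e ∈ span F {f, y} := by
        have : e = α⁻¹ • y := by rw [hyα, smul_smul, inv_mul_cancel₀ hα, one_smul]
        rw [this]
        exact Submodule.smul_mem _ _ (Submodule.subset_span (Set.mem_insert_of_mem _ rfl))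
      refine ⟨f, hf, le_antisymm ?_ ?_⟩
      · rw [hspan]
        exact Submodule.span_le.2 (Set.insert_subset_iff.2
          ⟨hemem, Set.singleton_subset_iff.2 (Submodule.subset_span (Set.mem_insert _ _))⟩)
      · exact Submodule.span_le.2 (Set.insert_subset_iff.2
          ⟨hf, Set.singleton_subset_iff.2 hyC⟩)
    · have hfmem : f ∈ span F {e, y} := by
        have : f = β⁻¹ • (y - α • e) := by
          rw [← hαβ, add_sub_cancel_left, smul_smul, inv_mul_cancel₀ hβ, one_smul]
        rw [this]
        refine Submodule.smul_mem _ _ (sub_mem ?_ ?_)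
        · exact Submodule.subset_span (Set.mem_insert_of_mem _ rfl)
        · exact Submodule.smul_mem _ _ (Submodule.subset_span (Set.mem_insert _ _))
      refine ⟨e, he, le_antisymm ?_ ?_⟩
      · rw [hspan]
        exact Submodule.span_le.2 (Set.insert_subset_iff.2
          ⟨Submodule.subset_span (Set.mem_insert _ _), Set.singleton_subset_iff.2 hfmem⟩)
      · exact Submodule.span_le.2 (Set.insert_subset_iff.2
          ⟨he, Set.singleton_subset_iff.2 hyC⟩)
  -- the sandwich-type relation
  have hxyy : ⁅⁅x, y⁆, y⁆ = 0 := by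
    have hxyC2 : ⁅x, y⁆ ∈ C 2 := hgrading 1 1 x hxC y hyC
    rw [hC2span] at hxyC2
    obtain ⟨c, hc⟩ := Submodule.mem_span_singleton.1 hxyC2
    rw [← hc, smul_lie, hvy, smul_zero]
  have hdag := stmt7_dagger hxyy
  -- m ≥ 4
  have hm2 : m ≠ 2 := by
    intro h
    rw [h, hC2span] at hfm
    have := stmt7_fr_span_singleton_le (F := F) ⁅e, f⁆
    omega
  have hm3 : m ≠ 3 := by
    intro h
    rw [h, hdim3] at hfm
    omega
  obtain ⟨k, hk1, hkm⟩ : ∃ k, 1 ≤ k ∧ m = k + 3 := ⟨m - 3, by omega, by omega⟩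
  rw [hkm] at hfm hfm1
  -- a generator w of C (k+2)
  obtain ⟨z₂, hz₂C, hz₂ne⟩ := (Submodule.ne_bot_iff _).1 (hne (k+1) (by omega) (by omega))
  have hCk2span := stmt7_cov2 hcov hCxy (i := k+1) (by omega) hz₂C hz₂ne
  haveI hfdk2 : FiniteDimensional F (C (k+2)) := by
    rw [hCk2span]
    exact FiniteDimensional.span_of_finite F (Set.toFinite _)
  obtain ⟨w, hwC, hwne⟩ := (Submodule.ne_bot_iff _).1 (hne (k+2) (by omega) (by omega))
  have hfrk2 : Module.finrank F (C (k+2)) = 1 := by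
    have hne2 : Module.finrank F (C (k+2)) ≠ 2 := by
      intro h
      exact hmin (k+2) (by omega) ⟨by omega, h, hfm⟩
    have hge : 1 ≤ Module.finrank F (C (k+2)) := by
      have hle : span F {w} ≤ C (k+2) := Submodule.span_le.2 (by rintro u rfl; exact hwC)
      have h1 := Submodule.finrank_mono (t := C (k+2)) hle
      rw [finrank_span_singleton hwne] at h1
      omega
    have := hdimle (k+2)
    omega
  have hwspan : C (k+2) = span F {w} := by
    refine (eq_of_le_of_finrank_le (Submodule.span_le.2 ?_) ?_).symm
    · rintro u rfl; exact hwC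
    · rw [finrank_span_singleton hwne, hfrk2]
  -- bases of the two diamonds
  have haC : ⁅w, x⁆ ∈ C (k+3) := hgrading (k+2) 1 w hwC x hxC
  have hbC : ⁅w, y⁆ ∈ C (k+3) := hgrading (k+2) 1 w hwC y hyC
  have hCk3span := stmt7_cov2 hcov hCxy (i := k+2) (by omega) hwC hwne
  have indep_ab := stmt7_indep hCk3span.symm.symm hfm
  have hbne : ⁅w, y⁆ ≠ 0 := by
    intro h
    have := (indep_ab 0 1 (by rw [h, zero_smul, one_smul, zero_add])).2
    exact one_ne_zero this
  have hCk4span := stmt7_cov2 hcov hCxy (i := k+3) (by omega) hbC hbne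
  have indep_pq := stmt7_indep hCk4span hfm1
  -- coordinates of ⁅⁅w,x⁆,y⁆
  have hayC : ⁅⁅w, x⁆, y⁆ ∈ C (k+4) := by
    have := hgrading (k+3) 1 _ haC y hyC
    exact this
  obtain ⟨γ, δ, hγδ⟩ := Submodule.mem_span_pair.1 (by rw [← hCk4span]; exact hayC :
    ⁅⁅w, x⁆, y⁆ ∈ span F {⁅⁅w, y⁆, x⁆, ⁅⁅w, y⁆, y⁆})
  -- Step 1: structure of the action of x, y on C (k+1)
  have step13 : ∀ u, u ∈ C (k+1) → ∃ σ : F,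
      ⁅u, y⁆ = σ • w ∧ ⁅u, x⁆ = (σ * δ + σ * δ) • w ∧ (u ≠ 0 → σ ≠ 0) := by
    intro u huC
    by_cases hu0 : u = 0
    · exact ⟨0, by simp [hu0], by simp [hu0], fun h => absurd hu0 h⟩
    have huyC : ⁅u, y⁆ ∈ span F {w} := by
      rw [← hwspan]; exact hgrading (k+1) 1 u huC y hyC
    have huxC : ⁅u, x⁆ ∈ span F {w} := by
      rw [← hwspan]; exact hgrading (k+1) 1 u huC x hxC
    obtain ⟨σ, hσ⟩ := Submodule.mem_span_singleton.1 huyC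
    obtain ⟨ρ, hρ⟩ := Submodule.mem_span_singleton.1 huxC
    have hd := hdag u
    rw [← hρ, ← hσ] at hd
    simp only [smul_lie] at hd
    rw [← hγδ] at hd
    have h0 : (σ - (σ * γ + σ * γ)) • ⁅⁅w, y⁆, x⁆ +
        (ρ - (σ * δ + σ * δ)) • ⁅⁅w, y⁆, y⁆ = 0 := by
      linear_combination (norm := module) hd
    obtain ⟨hs, ht⟩ := indep_pq _ _ h0
    have hρval : ρ = σ * δ + σ * δ := sub_eq_zero.1 ht
    have hσne : σ ≠ 0 := by
      intro hσ0
      have hρ0 : ρ = 0 := by rw [hρval, hσ0]; ring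
      have hux0 : ⁅u, x⁆ = 0 := by rw [← hρ, hρ0, zero_smul]
      have huy0 : ⁅u, y⁆ = 0 := by rw [← hσ, hσ0, zero_smul]
      have hcc := stmt7_cov2 hcov hCxy (i := k+1) (by omega) huC hu0
      rw [hux0, huy0] at hcc
      have : C (k+2) = ⊥ := by
        rw [hcc, Set.pair_eq_singleton, Submodule.span_zero_singleton]
      rw [this] at hwC
      exact hwne (by simpa using hwC)
    exact ⟨σ, hσ.symm, by rw [← hρ, hρval], fun _ => hσne⟩
  -- Final contradiction from degree k
  obtain ⟨z₁, hz₁C, hz₁ne⟩ := (Submodule.ne_bot_iff _).1 (hne k (by omega) (by omega))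
  have hu1C : ⁅z₁, x⁆ ∈ C (k+1) := hgrading k 1 z₁ hz₁C x hxC
  have hu2C : ⁅z₁, y⁆ ∈ C (k+1) := hgrading k 1 z₁ hz₁C y hyC
  obtain ⟨σ₁, h1y, h1x, h1nz⟩ := step13 _ hu1C
  obtain ⟨σ₂, h2y, h2x, h2nz⟩ := step13 _ hu2C
  have hd := hdag z₁
  rw [h1y, h2y, h2x] at hd
  simp only [smul_lie] at hd
  -- hd : σ₁ • ⁅w,y⁆ + σ₂ • ⁅w,x⁆ = (σ₂*δ+σ₂*δ) • ⁅w,y⁆ + (σ₂*δ+σ₂*δ) • ⁅w,y⁆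
  have h0 : σ₂ • ⁅w, x⁆ + (σ₁ - ((σ₂ * δ + σ₂ * δ) + (σ₂ * δ + σ₂ * δ))) • ⁅w, y⁆ = 0 := by
    linear_combination (norm := module) hd
  obtain ⟨hs2, hs1⟩ := indep_ab _ _ h0
  have hσ₁0 : σ₁ = 0 := by
    have := sub_eq_zero.1 hs1
    rw [this, hs2]; ring
  have hu1 : ⁅z₁, x⁆ = 0 := by
    by_contra h
    exact h1nz h hσ₁0
  have hu2 : ⁅z₁, y⁆ = 0 := by
    by_contra h
    exact h2nz h hs2
  have hfin := stmt7_cov2 hcov hCxy (i := k) hk1 hz₁C hz₁ne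
  rw [hu1, hu2] at hfin
  have hbot : C (k+1) = ⊥ := by
    rw [hfin, Set.pair_eq_singleton, Submodule.span_zero_singleton]
  rw [hbot] at hz₂C
  exact hz₂ne (by simpa using hz₂C)
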